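/- arXiv:math/0610690 — 2 statements merged into one kernel-verified Lean document; each statement's English description precedes it below -/
import Mathlib

section
/- The point (a₁/a₂, 0, 0) is always a solution of the equilibrium system a₁ - a₂x - a₃xz = 0, a₄y - a₃xz = 0, a₄a₅y - a₆z - a₇xz = 0, and if 0 ≤ a₇ < a₃a₅ and 0 < a₂a₆ < a₁(a₃a₅ - a₇), these are exactly two distinct solutions of the system, namely (a₁/a₂, 0, 0) and the interior equilibrium (x₀, y₀, z₀). -/
theorem equilibria_exactly_two
    (a1 a2 a3 a4 a5 a6 a7 : ℝ)
    (h1 : 0 < a1) (h2 : 0 < a2) (h3 : 0 < a3) (h4 : 0 < a4)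
    (h5 : 0 < a5) (h6 : 0 < a6)
    (h7 : 0 ≤ a7) (h7' : a7 < a3 * a5)
    (h8 : 0 < a2 * a6) (h8' : a2 * a6 < a1 * (a3 * a5 - a7)) :
    (a1 - a2 * (a1 / a2) - a3 * (a1 / a2) * 0 = 0 ∧
     a4 * 0 - a3 * (a1 / a2) * 0 = 0 ∧
     a4 * a5 * 0 - a6 * 0 - a7 * (a1 / a2) * 0 = 0) ∧
    (a1 / a2, (0 : ℝ), (0 : ℝ)) ≠
      (a6 / (a3 * a5 - a7),
       (a1 * (a3 * a5 - a7) - a2 * a6) / (a4 * (a3 * a5 - a7)),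
       (a1 * (a3 * a5 - a7) - a2 * a6) / (a3 * a6)) ∧
    {p : ℝ × ℝ × ℝ |
        a1 - a2 * p.1 - a3 * p.1 * p.2.2 = 0 ∧
        a4 * p.2.1 - a3 * p.1 * p.2.2 = 0 ∧
        a4 * a5 * p.2.1 - a6 * p.2.2 - a7 * p.1 * p.2.2 = 0} =
      {(a1 / a2, (0 : ℝ), (0 : ℝ)),
       (a6 / (a3 * a5 - a7),
        (a1 * (a3 * a5 - a7) - a2 * a6) / (a4 * (a3 * a5 - a7)),
        (a1 * (a3 * a5 - a7) - a2 * a6) / (a3 * a6))} := by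
  have hD : 0 < a3 * a5 - a7 := by linarith
  have hzpos : 0 < (a1 * (a3 * a5 - a7) - a2 * a6) / (a3 * a6) :=
    div_pos (by linarith) (by positivity)
  refine ⟨⟨by field_simp; ring, by ring, by ring⟩, ?_, ?_⟩
  · intro h
    have := congrArg (fun p : ℝ × ℝ × ℝ => p.2.2) h
    simp only at this
    linarith [this ▸ hzpos]
  · ext ⟨x, y, z⟩
    simp only [Set.mem_setOf_eq, Set.mem_insert_iff, Set.mem_singleton_iff, Prod.mk.injEq]
    constructor
    · rintro ⟨e1, e2, e3⟩
      have key : z * ((a3 * a5 - a7) * x - a6) = 0 := by linear_combination e3 - a5 * e2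
      rcases mul_eq_zero.mp key with hz | hx
      · left
        subst hz
        have hy : y = 0 := by
          have := e2; nlinarith
        subst hy
        refine ⟨?_, rfl, rfl⟩
        field_simp
        linarith [e1]
      · right
        have hx' : x = a6 / (a3 * a5 - a7) := by
          field_simp
          linarith [hx]
        subst hx'
        have hxpos : 0 < a6 / (a3 * a5 - a7) := div_pos h6 hD
        have hz' : z = (a1 * (a3 * a5 - a7) - a2 * a6) / (a3 * a6) := by
          have h1' : a1 - a2 * (a6 / (a3 * a5 - a7)) = a3 * (a6 / (a3 * a5 - a7)) * z := by
            linarith [e1]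
          field_simp at h1' ⊢
          nlinarith [h1']
        subst hz'
        have hy' : y = (a1 * (a3 * a5 - a7) - a2 * a6) / (a4 * (a3 * a5 - a7)) := by
          have := e2
          field_simp at this ⊢
          nlinarith [this]
        exact ⟨rfl, hy', rfl⟩
    · rintro (⟨hx, hy, hz⟩ | ⟨hx, hy, hz⟩) <;> subst hx <;> subst hy <;> subst hz
      · refine ⟨by field_simp; ring, by ring, by ring⟩
      · refine ⟨?_, ?_, ?_⟩ <;> field_simp [hD.ne', show a5 * a3 - a7 ≠ 0 by linarith [mul_comm a5 a3]] <;> ring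
end

section
/- A purely imaginary number λ = iω with ω > 0 is a root of λ³ + p₂λ² + p₁λ + (r₂λ² + r₁λ + r₀)e^{-λτ} = 0 for some τ ≥ 0 only if ω² is a positive root of the cubic u³ + n₁u² + n₂u + n₃ = 0, where n₁ = p₂² - 2p₁ - r₂², n₂ = p₁² - r₁² + 2r₀r₂, n₃ = -r₀². -/
theorem imaginary_root_gives_cubic
    (p1 p2 r0 r1 r2 ω : ℝ) (hω : 0 < ω)
    (h : ∃ τ : ℝ, 0 ≤ τ ∧
      (Complex.I * ω) ^ 3 + (p2 : ℂ) * (Complex.I * ω) ^ 2 +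
        (p1 : ℂ) * (Complex.I * ω) +
        ((r2 : ℂ) * (Complex.I * ω) ^ 2 + (r1 : ℂ) * (Complex.I * ω) + (r0 : ℂ)) *
          Complex.exp (-(Complex.I * ω) * τ) = 0) :
    0 < ω ^ 2 ∧
    (ω ^ 2) ^ 3 + (p2 ^ 2 - 2 * p1 - r2 ^ 2) * (ω ^ 2) ^ 2 +
      (p1 ^ 2 - r1 ^ 2 + 2 * r0 * r2) * (ω ^ 2) + (-(r0 ^ 2)) = 0 := by
  obtain ⟨τ, hτ, heq⟩ := h
  refine ⟨by positivity, ?_⟩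
  have h1 : ((r2 : ℂ) * (Complex.I * ω) ^ 2 + (r1 : ℂ) * (Complex.I * ω) + (r0 : ℂ)) *
      Complex.exp (-(Complex.I * ω) * τ) =
      -((Complex.I * ω) ^ 3 + (p2 : ℂ) * (Complex.I * ω) ^ 2 + (p1 : ℂ) * (Complex.I * ω)) := by
    linear_combination heq
  have habs := congrArg norm h1
  rw [norm_mul, Complex.norm_exp] at habs
  have hre : (-(Complex.I * ω) * τ).re = 0 := by simp
  rw [hre, Real.exp_zero, mul_one] at habs
  have hsq := congrArg (· ^ 2) habs
  simp only [Complex.sq_norm] at hsq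
  have h2 : Complex.normSq ((r2 : ℂ) * (Complex.I * ω) ^ 2 + (r1 : ℂ) * (Complex.I * ω) + (r0 : ℂ))
      = (r0 - r2 * ω ^ 2) ^ 2 + (r1 * ω) ^ 2 := by
    simp [mul_pow, pow_succ, Complex.I_sq, Complex.normSq_apply, Complex.add_re, Complex.add_im, Complex.mul_re, Complex.mul_im]
    ring
  have h3 : Complex.normSq (-((Complex.I * ω) ^ 3 + (p2 : ℂ) * (Complex.I * ω) ^ 2 + (p1 : ℂ) * (Complex.I * ω)))
      = (p2 * ω ^ 2) ^ 2 + (ω ^ 3 - p1 * ω) ^ 2 := by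
    simp [mul_pow, pow_succ, Complex.I_sq, Complex.normSq_apply, Complex.add_re, Complex.add_im, Complex.mul_re, Complex.mul_im]
    ring
  rw [h2, h3] at hsq
  nlinarith [hsq]
end
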